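/- Fix reals μ > 0, k > 0, η > 0, d and Δd, set g(d) := (1−d)² + η, and let ε, Δε be symmetric real 3×3 matrices with tr ε > 0. Define Δσ := g(d)[2μ Δε^dev + k (tr Δε) I] − 2(1−d)[2μ ε^dev + k (tr ε) I] Δd. If tr Δσ = 0, Δσ · ε^dev = 0 and Δσ · Δε = 0, then the updated deviatoric strain norm satisfies (ε + Δε)^dev · (ε + Δε)^dev = ε^dev · ε^dev + 4 (ε^dev · ε^dev) [ ((1−d)/g(d)) Δd + ((1−d)²/g(d)²) (Δd)² ]. -/

import Mathlib

open Matrix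

noncomputable def dev (A : Matrix (Fin 3) (Fin 3) ℝ) : Matrix (Fin 3) (Fin 3) ℝ :=
  A - (A.trace / 3) • (1 : Matrix (Fin 3) (Fin 3) ℝ)

noncomputable def frob (A B : Matrix (Fin 3) (Fin 3) ℝ) : ℝ := (Aᵀ * B).trace

lemma dev_trace (A : Matrix (Fin 3) (Fin 3) ℝ) : (dev A).trace = 0 := by
  simp [dev, Matrix.trace_sub, Matrix.trace_smul, Matrix.trace_one]

lemma dev_add (A B : Matrix (Fin 3) (Fin 3) ℝ) : dev (A + B) = dev A + dev B := by
  simp [dev, Matrix.trace_add, add_div, add_smul]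
  abel

lemma frob_comm (A B : Matrix (Fin 3) (Fin 3) ℝ) : frob A B = frob B A := by
  rw [frob, frob, ← Matrix.trace_transpose (Aᵀ * B), Matrix.transpose_mul,
    Matrix.transpose_transpose]

lemma frob_add_left (A B C : Matrix (Fin 3) (Fin 3) ℝ) :
    frob (A + B) C = frob A C + frob B C := by
  simp [frob, Matrix.transpose_add, Matrix.add_mul]

lemma frob_sub_left (A B C : Matrix (Fin 3) (Fin 3) ℝ) :
    frob (A - B) C = frob A C - frob B C := by
  simp [frob, Matrix.transpose_sub, Matrix.sub_mul]

lemma frob_smul_left (r : ℝ) (A B : Matrix (Fin 3) (Fin 3) ℝ) :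
    frob (r • A) B = r * frob A B := by
  simp [frob, Matrix.transpose_smul, Matrix.smul_mul]

lemma frob_add_right (A B C : Matrix (Fin 3) (Fin 3) ℝ) :
    frob A (B + C) = frob A B + frob A C := by
  simp [frob, Matrix.mul_add]

lemma frob_sub_right (A B C : Matrix (Fin 3) (Fin 3) ℝ) :
    frob A (B - C) = frob A B - frob A C := by
  simp [frob, Matrix.mul_sub]

lemma frob_smul_right (r : ℝ) (A B : Matrix (Fin 3) (Fin 3) ℝ) :
    frob A (r • B) = r * frob A B := by
  simp [frob, Matrix.mul_smul]

lemma frob_one_right (A : Matrix (Fin 3) (Fin 3) ℝ) : frob A 1 = A.trace := by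
  simp [frob]

lemma frob_one_left (A : Matrix (Fin 3) (Fin 3) ℝ) : frob 1 A = A.trace := by
  rw [frob_comm, frob_one_right]

theorem fixed_stress_updated_deviatoric_norm
    (μ k η d Δd : ℝ) (hμ : 0 < μ) (hk : 0 < k) (hη : 0 < η)
    (ε Δε : Matrix (Fin 3) (Fin 3) ℝ) (hε : ε.IsSymm) (hΔε : Δε.IsSymm)
    (htr : 0 < ε.trace)
    (Δσ : Matrix (Fin 3) (Fin 3) ℝ)
    (hΔσ : Δσ = ((1 - d) ^ 2 + η) •
        ((2 * μ) • dev Δε + (k * Δε.trace) • (1 : Matrix (Fin 3) (Fin 3) ℝ))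
      - (2 * (1 - d) * Δd) •
        ((2 * μ) • dev ε + (k * ε.trace) • (1 : Matrix (Fin 3) (Fin 3) ℝ)))
    (h0 : Δσ.trace = 0) (h1 : frob Δσ (dev ε) = 0) (h2 : frob Δσ Δε = 0) :
    frob (dev (ε + Δε)) (dev (ε + Δε))
      = frob (dev ε) (dev ε)
        + 4 * frob (dev ε) (dev ε)
          * ((1 - d) / ((1 - d) ^ 2 + η) * Δd
            + (1 - d) ^ 2 / ((1 - d) ^ 2 + η) ^ 2 * Δd ^ 2) := by
  set g : ℝ := (1 - d) ^ 2 + η with hgdef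
  set c : ℝ := 2 * (1 - d) * Δd with hcdef
  have hg0 : g ≠ 0 := by positivity
  have hμ2 : (2 : ℝ) * μ ≠ 0 := by positivity
  -- decompose h2 using h0
  have h2' : frob Δσ (dev Δε) = 0 := by
    have hdec : frob Δσ Δε
        = frob Δσ (dev Δε) + (Δε.trace / 3) * Δσ.trace := by
      rw [dev, frob_sub_right, frob_smul_right, frob_one_right]; ring
    rw [hdec, h0] at h2; linarith
  rw [hΔσ] at h1 h2'
  simp only [frob_sub_left, frob_add_left, frob_smul_left, frob_smul_right,
    frob_add_right, frob_one_left, dev_trace] at h1 h2'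
  have hcomm : frob (dev ε) (dev Δε) = frob (dev Δε) (dev ε) := frob_comm _ _
  set E : ℝ := frob (dev ε) (dev ε) with hE
  set X : ℝ := frob (dev Δε) (dev ε) with hX
  set D : ℝ := frob (dev Δε) (dev Δε) with hD
  rw [hcomm] at h2'
  have eX : g * X - c * E = 0 := by
    have h : 2 * μ * (g * X - c * E) = 0 := by linear_combination h1
    exact (mul_eq_zero.mp h).resolve_left hμ2
  have eD : g * D - c * X = 0 := by
    have h : 2 * μ * (g * D - c * X) = 0 := by linear_combination h2'
    exact (mul_eq_zero.mp h).resolve_left hμ2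
  rw [dev_add]
  simp only [frob_add_left, frob_add_right, hcomm, ← hE, ← hX, ← hD]
  have : E + X + (X + D) = E + 4 * E * ((1 - d) / g * Δd + (1 - d) ^ 2 / g ^ 2 * Δd ^ 2) := by
    field_simp
    linear_combination (2 * g + c) * eX + g * eD
  linarith [this]
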